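/- Let n, k be integers with 1 ≤ k ≤ n, and let p and q both be major motifs of n with exactly k parts. If p[1] > q[1], then p dominates q. -/

import Mathlib

/-- A motif of `n`: a non-increasing sequence (list) of positive integers summing to `n`. -/
def IsMotif (n : ℕ) (p : List ℕ) : Prop :=
  p.Pairwise (· ≥ ·) ∧ (∀ x ∈ p, 0 < x) ∧ p.sum = n

/-- `p` dominates `q`. -/
def Dominates (p q : List ℕ) : Prop :=
  ∀ t, 1 ≤ t → t ≤ min p.length q.length → (q.take t).sum ≤ (p.take t).sum

/-- The major motif of `n` with `k` parts and first entry `lam`: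
`β = ⌊(n−k)/(lam−1)⌋` copies of `lam`, then `n − β·lam − (k−β−1)`,
then `k − β − 1` ones. -/
def majorMotif (n k lam : ℕ) : List ℕ :=
  List.replicate ((n - k) / (lam - 1)) lam ++
    (n - ((n - k) / (lam - 1)) * lam - (k - (n - k) / (lam - 1) - 1)) ::
      List.replicate (k - (n - k) / (lam - 1) - 1) 1

/-- `p` is a major motif of `n` with `k` parts: for some admissible first
entry `lam` (with `1 < lam` and `⌈n/k⌉ ≤ lam ≤ n − k + 1`), `p = majorMotif n k lam`. -/
def IsMajorMotif (n k : ℕ) (p : List ℕ) : Prop :=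
  ∃ lam : ℕ, 1 < lam ∧ (n + k - 1) / k ≤ lam ∧ lam ≤ n - k + 1 ∧
    p = majorMotif n k lam


/-- if `p` and `q` are both major motifs of `n` with `k` parts
and `p[1] > q[1]`, then `p` dominates `q`. -/
lemma sorted_le_headI {q : List ℕ} (hs : q.Pairwise (· ≥ ·)) : ∀ x ∈ q, x ≤ q.headI := by
  cases q with
  | nil => simp
  | cons a l =>
    intro x hx
    rcases List.mem_cons.1 hx with rfl | hx
    · simp
    · exact List.rel_of_pairwise_cons hs hx

theorem strength_stmt_10 {n k : ℕ} (h1 : 1 ≤ k) (h2 : k ≤ n)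
    (p q : List ℕ) (hp : IsMotif n p) (hq : IsMotif n q)
    (hplen : p.length = k) (hqlen : q.length = k)
    (hpmaj : IsMajorMotif n k p) (hqmaj : IsMajorMotif n k q)
    (hfirst : q.headI < p.headI) :
    Dominates p q := by
  obtain ⟨lam, hlam1, hlam2, hlam3, hpe⟩ := hpmaj
  set β := (n - k) / (lam - 1) with hβdef
  set r := k - β - 1 with hrdef
  set m := n - β * lam - r with hmdef
  have hpe' : p = List.replicate β lam ++ m :: List.replicate r 1 := hpe
  have hlen : β + 1 + r = k := by
    have h := hplen
    rw [hpe'] at h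
    simp [List.length_append] at h
    omega
  have hβ1 : 1 ≤ β := (Nat.one_le_div_iff (by omega)).2 (by omega)
  have hmul : β * lam = β * (lam - 1) + β * 1 := by
    rw [← Nat.mul_add]; congr 1; omega
  have hdivmul : β * (lam - 1) ≤ n - k := Nat.div_mul_le_self (n - k) (lam - 1)
  have hkey : β * lam + r + 1 ≤ n := by omega
  have hhead : p.headI = lam := by
    rw [hpe']
    obtain ⟨c, hc⟩ := Nat.exists_eq_add_of_le hβ1
    rw [hc, Nat.add_comm, List.replicate_succ]
    simp
  have hqhead : ∀ x ∈ q, x ≤ lam - 1 := by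
    intro x hx
    have := sorted_le_headI hq.1 x hx
    omega
  intro t ht1 ht2
  rw [hplen, hqlen, min_self] at ht2
  rcases le_or_gt t β with htβ | htβ
  · -- prefix sums: p gives t * lam, q at most t * (lam - 1)
    have hps : (p.take t).sum = t * lam := by
      rw [hpe', List.take_append, List.take_replicate,
        min_eq_left htβ, List.length_replicate]
      have : t - β = 0 := by omega
      simp [this, Nat.smul_one_eq_cast]
    have hqs : (q.take t).sum ≤ t * (lam - 1) := by
      have h := List.sum_le_card_nsmul (q.take t) (lam - 1)
        (fun x hx => hqhead x (List.mem_of_mem_take hx))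
      have hl : (q.take t).length = t := by
        rw [List.length_take]; omega
      simpa [hl] using h
    have : t * (lam - 1) ≤ t * lam := Nat.mul_le_mul_left t (by omega)
    omega
  · -- compute p.take t sum = n - (k - t)
    have hps : (p.take t).sum = β * lam + (m + (t - β - 1)) := by
      rw [hpe', List.take_append, List.take_replicate,
        min_eq_right (le_of_lt htβ), List.length_replicate]
      obtain ⟨s, hs⟩ := Nat.exists_eq_add_of_lt htβ
      have : t - β = s + 1 := by omega
      rw [this, List.take_cons, List.take_replicate]
      have hsr : min (s + 1 - 1) r = s := by omega
      rw [hsr]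
      simp [Nat.smul_one_eq_cast]
      omega
    have hqd : k - t ≤ (q.drop t).sum := by
      have h := List.length_le_sum_of_one_le (q.drop t)
        (fun x hx => hq.2.1 x (List.mem_of_mem_drop hx))
      rw [List.length_drop, hqlen] at h
      exact h
    have hqt : (q.take t).sum + (q.drop t).sum = n := by
      rw [List.sum_take_add_sum_drop, hq.2.2]
    omega
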